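/- Fix 0 < ρ2 < ρ1 and set F² = (√ρ1 − √ρ2)/(√ρ1 + √ρ2) and λ* = √ρ1/(√ρ1 + √ρ2) (so 0 < λ* < 1). Then for every real λ the identity (1/2)·[ρ2·((1−λ)/(1−λ*))² − ρ1·(λ/λ*)²] + ((ρ2 − ρ1)/F²)·(λ* − λ) = (ρ2 − ρ1)/2 holds. In fluid-dynamical terms: the downstream laminar conjugate flow, with lower-layer depth λ* and horizontal velocities λ/λ* in the lower layer and (1−λ)/(1−λ*) in the upper layer (determined by conservation of mass flux from the unit-velocity upstream flow with lower-layer depth λ), satisfies the dynamic (Bernoulli jump) boundary condition at interface height λ* − λ for every upstream depth λ, precisely when F² and λ* take the stated values. -/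

import Mathlib

/-- **The conjugate laminar flow satisfies the dynamic condition.** With
`F² = (√ρ1-√ρ2)/(√ρ1+√ρ2)` and `λ* = √ρ1/(√ρ1+√ρ2)` (so `0 < λ* < 1`), for every
upstream depth `λ` the downstream laminar flow with lower-layer depth `λ*` and
layer speeds `λ/λ*`, `(1-λ)/(1-λ*)` satisfies the Bernoulli jump condition at
interface height `λ* − λ`. -/
theorem conjugate_laminar_dynamic_condition (ρ1 ρ2 : ℝ) (hρ2 : 0 < ρ2) (hρ : ρ2 < ρ1)
    (Fsq lamstar : ℝ)
    (hFsq : Fsq = (Real.sqrt ρ1 - Real.sqrt ρ2) / (Real.sqrt ρ1 + Real.sqrt ρ2))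
    (hls : lamstar = Real.sqrt ρ1 / (Real.sqrt ρ1 + Real.sqrt ρ2)) :
    (0 < lamstar ∧ lamstar < 1) ∧
    ∀ lam : ℝ,
      (1/2) * (ρ2 * ((1 - lam) / (1 - lamstar))^2 - ρ1 * (lam / lamstar)^2)
        + ((ρ2 - ρ1) / Fsq) * (lamstar - lam) = (ρ2 - ρ1) / 2 := by
  have hρ1 : 0 < ρ1 := hρ2.trans hρ
  set s1 := Real.sqrt ρ1 with hs1def
  set s2 := Real.sqrt ρ2 with hs2def
  have h1 : 0 < s1 := Real.sqrt_pos.mpr hρ1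
  have h2 : 0 < s2 := Real.sqrt_pos.mpr hρ2
  have hlt : s2 < s1 := Real.sqrt_lt_sqrt hρ2.le hρ
  have hsum : 0 < s1 + s2 := by linarith
  have hsq1 : s1 ^ 2 = ρ1 := Real.sq_sqrt hρ1.le
  have hsq2 : s2 ^ 2 = ρ2 := Real.sq_sqrt hρ2.le
  have hFne : Fsq ≠ 0 := by
    rw [hFsq]
    exact ne_of_gt (div_pos (by linarith) hsum)
  have h1m : 1 - lamstar = s2 / (s1 + s2) := by
    rw [hls]; field_simp; ring
  constructor
  · constructor
    · rw [hls]; positivity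
    · nlinarith [div_pos h2 hsum, h1m]
  · intro lam
    rw [hls] at h1m
    rw [hls, hFsq, h1m]
    have hne : s1 - s2 ≠ 0 := by linarith
    rw [← hsq1, ← hsq2]
    field_simp
    ring
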